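/- Let P1 = {x ∈ ℝ^n : A1 x ≤ b1} and P2 = {x ∈ ℝ^n : A2 x ≤ b2} be nonempty polytopes (bounded polyhedra). Then the convex hull of P1 ∪ P2 equals the set Q = {x : ∃ x1, x2 ∈ ℝ^n, ∃ λ ∈ [0,1], x = x1 + x2, A1 x1 ≤ λ b1, A2 x2 ≤ (1−λ) b2}. -/

import Mathlib

open Matrix

private lemma recession_eq_zero {m n : ℕ} (A : Matrix (Fin m) (Fin n) ℝ) (b : Fin m → ℝ)
    (hne : {x : Fin n → ℝ | A.mulVec x ≤ b}.Nonempty)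
    (hbd : Bornology.IsBounded {x : Fin n → ℝ | A.mulVec x ≤ b})
    (v : Fin n → ℝ) (hv : A.mulVec v ≤ 0) : v = 0 := by
  obtain ⟨p, hp⟩ := hne
  obtain ⟨C, hC⟩ := isBounded_iff_forall_norm_le.mp hbd
  by_contra hv0
  have hvn : 0 < ‖v‖ := norm_pos_iff.mpr hv0
  set t : ℝ := (C + ‖p‖ + 1) / ‖v‖ with ht
  have hCp : 0 ≤ C + ‖p‖ := by
    have := hC p hp
    have := norm_nonneg p
    linarith
  have ht0 : 0 ≤ t := by positivity
  have hmem : p + t • v ∈ {x : Fin n → ℝ | A.mulVec x ≤ b} := by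
    intro i
    have h1 := hp i
    have h2 : A.mulVec v i ≤ 0 := by simpa using hv i
    have : A.mulVec (p + t • v) i = A.mulVec p i + t * A.mulVec v i := by
      rw [Matrix.mulVec_add, Matrix.mulVec_smul]
      simp [Pi.smul_apply, smul_eq_mul]
    rw [this]
    nlinarith
  have hb := hC _ hmem
  have h1 : ‖t • v‖ ≤ ‖p + t • v‖ + ‖p‖ := by
    have := norm_add_le (p + t • v) (-p)
    simpa [add_assoc] using this
  have h2 : ‖t • v‖ = t * ‖v‖ := by
    rw [norm_smul, Real.norm_eq_abs, abs_of_nonneg ht0]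
  have h3 : t * ‖v‖ = C + ‖p‖ + 1 := by
    rw [ht, div_mul_cancel₀ _ (ne_of_gt hvn)]
  linarith [h1, hb]

/-- Balas's disjunctive formulation of the convex hull of the union of two
nonempty polytopes. -/
theorem convexHull_union_two_polytopes (n m1 m2 : ℕ)
    (A1 : Matrix (Fin m1) (Fin n) ℝ) (b1 : Fin m1 → ℝ)
    (A2 : Matrix (Fin m2) (Fin n) ℝ) (b2 : Fin m2 → ℝ)
    (hne1 : {x : Fin n → ℝ | A1.mulVec x ≤ b1}.Nonempty)
    (hne2 : {x : Fin n → ℝ | A2.mulVec x ≤ b2}.Nonempty)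
    (hbd1 : Bornology.IsBounded {x : Fin n → ℝ | A1.mulVec x ≤ b1})
    (hbd2 : Bornology.IsBounded {x : Fin n → ℝ | A2.mulVec x ≤ b2}) :
    convexHull ℝ ({x : Fin n → ℝ | A1.mulVec x ≤ b1} ∪
        {x : Fin n → ℝ | A2.mulVec x ≤ b2}) =
      {x : Fin n → ℝ | ∃ x1 x2 : Fin n → ℝ, ∃ l : ℝ, 0 ≤ l ∧ l ≤ 1 ∧
        x = x1 + x2 ∧ A1.mulVec x1 ≤ l • b1 ∧ A2.mulVec x2 ≤ (1 - l) • b2} := by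
  set P1 := {x : Fin n → ℝ | A1.mulVec x ≤ b1}
  set P2 := {x : Fin n → ℝ | A2.mulVec x ≤ b2}
  set Q := {x : Fin n → ℝ | ∃ x1 x2 : Fin n → ℝ, ∃ l : ℝ, 0 ≤ l ∧ l ≤ 1 ∧
        x = x1 + x2 ∧ A1.mulVec x1 ≤ l • b1 ∧ A2.mulVec x2 ≤ (1 - l) • b2} with hQ
  apply le_antisymm
  · -- conv ⊆ Q
    apply convexHull_min
    · rintro x (hx | hx)
      · exact ⟨x, 0, 1, zero_le_one, le_refl 1, by simp, by rw [one_smul]; exact hx,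
          by simp [Matrix.mulVec_zero]⟩
      · exact ⟨0, x, 0, le_refl 0, zero_le_one, by simp, by simp [Matrix.mulVec_zero],
          by rw [sub_zero, one_smul]; exact hx⟩
    · -- Q is convex
      rintro x ⟨x1, x2, l, hl0, hl1, hxe, hx1, hx2⟩ y ⟨y1, y2, m, hm0, hm1, hye, hy1, hy2⟩
        a b ha hb hab
      refine ⟨a • x1 + b • y1, a • x2 + b • y2, a * l + b * m, by positivity, by nlinarith, ?_, ?_, ?_⟩
      · rw [hxe, hye]; module
      · intro i
        have h1 := hx1 i
        have h2 := hy1 i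
        have e : A1.mulVec (a • x1 + b • y1) i = a * A1.mulVec x1 i + b * A1.mulVec y1 i := by
          rw [Matrix.mulVec_add, Matrix.mulVec_smul, Matrix.mulVec_smul]
          simp [smul_eq_mul]
        rw [e]
        simp only [Pi.smul_apply, smul_eq_mul] at h1 h2 ⊢
        have hsum := add_le_add (mul_le_mul_of_nonneg_left h1 ha)
          (mul_le_mul_of_nonneg_left h2 hb)
        have heq : a * (l * b1 i) + b * (m * b1 i) = (a * l + b * m) * b1 i := by ring
        linarith
      · intro i
        have h1 := hx2 i
        have h2 := hy2 i
        have e : A2.mulVec (a • x2 + b • y2) i = a * A2.mulVec x2 i + b * A2.mulVec y2 i := by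
          rw [Matrix.mulVec_add, Matrix.mulVec_smul, Matrix.mulVec_smul]
          simp [smul_eq_mul]
        rw [e]
        simp only [Pi.smul_apply, smul_eq_mul] at h1 h2 ⊢
        have hsum := add_le_add (mul_le_mul_of_nonneg_left h1 ha)
          (mul_le_mul_of_nonneg_left h2 hb)
        have heq : a * ((1 - l) * b2 i) + b * ((1 - m) * b2 i)
            = (1 - (a * l + b * m)) * b2 i := by linear_combination (b2 i) * hab
        linarith
  · -- Q ⊆ conv
    rintro x ⟨x1, x2, l, hl0, hl1, hxe, hx1, hx2⟩
    have hsub1 : P1 ⊆ convexHull ℝ (P1 ∪ P2) :=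
      subset_trans Set.subset_union_left (subset_convexHull ℝ _)
    have hsub2 : P2 ⊆ convexHull ℝ (P1 ∪ P2) :=
      subset_trans Set.subset_union_right (subset_convexHull ℝ _)
    rcases eq_or_lt_of_le hl0 with h0 | h0
    · -- l = 0
      have hx10 : x1 = 0 := by
        apply recession_eq_zero A1 b1 hne1 hbd1
        simpa [← h0] using hx1
      have : x ∈ P2 := by
        have : A2.mulVec x2 ≤ b2 := by simpa [← h0] using hx2
        show A2.mulVec x ≤ b2; simpa [hxe, hx10] using this
      exact hsub2 this
    rcases eq_or_lt_of_le hl1 with h1 | h1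
    · -- l = 1
      have hx20 : x2 = 0 := by
        apply recession_eq_zero A2 b2 hne2 hbd2
        simpa [h1] using hx2
      have : x ∈ P1 := by
        have : A1.mulVec x1 ≤ b1 := by simpa [h1] using hx1
        show A1.mulVec x ≤ b1; simpa [hxe, hx20] using this
      exact hsub1 this
    · -- 0 < l < 1
      have hl0' : (0:ℝ) < l := h0
      have hl1' : (0:ℝ) < 1 - l := by linarith
      have hy1 : l⁻¹ • x1 ∈ P1 := by
        intro i
        have h := hx1 i
        have : A1.mulVec (l⁻¹ • x1) i = l⁻¹ * A1.mulVec x1 i := by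
          rw [Matrix.mulVec_smul]; simp [smul_eq_mul]
        rw [this]
        simp only [Pi.smul_apply, smul_eq_mul] at h
        calc l⁻¹ * A1.mulVec x1 i ≤ l⁻¹ * (l * b1 i) :=
              mul_le_mul_of_nonneg_left h (by positivity)
          _ = b1 i := by field_simp
      have hy2 : (1 - l)⁻¹ • x2 ∈ P2 := by
        intro i
        have h := hx2 i
        have : A2.mulVec ((1 - l)⁻¹ • x2) i = (1 - l)⁻¹ * A2.mulVec x2 i := by
          rw [Matrix.mulVec_smul]; simp [smul_eq_mul]
        rw [this]
        simp only [Pi.smul_apply, smul_eq_mul] at h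
        calc (1 - l)⁻¹ * A2.mulVec x2 i ≤ (1 - l)⁻¹ * ((1 - l) * b2 i) :=
              mul_le_mul_of_nonneg_left h (by positivity)
          _ = b2 i := by field_simp
      have hconv : Convex ℝ (convexHull ℝ (P1 ∪ P2)) := convex_convexHull ℝ _
      have := hconv (hsub1 hy1) (hsub2 hy2) (le_of_lt hl0') (le_of_lt hl1') (by ring)
      have hx : x = l • (l⁻¹ • x1) + (1 - l) • ((1 - l)⁻¹ • x2) := by
        rw [smul_smul, smul_smul, mul_inv_cancel₀ (ne_of_gt hl0'),
          mul_inv_cancel₀ (ne_of_gt hl1'), one_smul, one_smul, hxe]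
      rwa [hx]
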